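/- Let f : [0, T] → ℝ be continuous, differentiable on (0, T), with f(0) ≤ M and with the property that at any t ∈ (0, T) where f(t) ≥ M one has f'(t) ≤ K · f(t)^5 for constants K, M > 0. If 4 K T M^4 < 1/2, then f(t) ≤ M · (1 − 4 K t M^4)^{−1/4} for all t ∈ [0, T]. -/

import Mathlib

open Set

private lemma aux_gderiv (c k : ℝ) (hc : 0 < c) (hk : 0 < k) (x : ℝ)
    (hx : 0 < 1 - 4 * k * x * c ^ 4) :
    HasDerivAt (fun t => c * (1 - 4 * k * t * c ^ 4) ^ (-(1 : ℝ) / 4))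
      (k * (c * (1 - 4 * k * x * c ^ 4) ^ (-(1 : ℝ) / 4)) ^ 5) x := by
  have hh : HasDerivAt (fun t : ℝ => 1 - 4 * k * t * c ^ 4) (-(4 * k * c ^ 4)) x := by
    have h1 : HasDerivAt (fun t : ℝ => 4 * k * t * c ^ 4) (4 * k * c ^ 4) x := by
      simpa using (((hasDerivAt_id x).const_mul (4 * k)).mul_const (c ^ 4))
    simpa using h1.const_sub 1
  have h2 := (hh.rpow_const (p := -(1:ℝ)/4) (Or.inl hx.ne')).const_mul c
  convert h2 using 1
  case e'_4 => rfl
  case e'_5 => rfl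
  have h3 : (c * (1 - 4 * k * x * c ^ 4) ^ (-(1 : ℝ) / 4)) ^ 5
      = c ^ 5 * (1 - 4 * k * x * c ^ 4) ^ ((-(1 : ℝ) / 4) * 5) := by
    rw [mul_pow, ← Real.rpow_natCast ((1 - 4 * k * x * c ^ 4) ^ (-(1:ℝ)/4)) 5,
      ← Real.rpow_mul hx.le]
    norm_num
  have h4 : (-(1 : ℝ) / 4) * 5 = -(1:ℝ)/4 - 1 := by norm_num
  rw [h3, h4]
  ring

theorem maximum_principle_ode_comparison (K M T : ℝ) (hK : 0 < K) (hM : 0 < M)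
    (f f' : ℝ → ℝ)
    (hcont : ContinuousOn f (Set.Icc 0 T))
    (hderiv : ∀ t ∈ Set.Ioo (0 : ℝ) T, HasDerivAt f (f' t) t)
    (h0 : f 0 ≤ M)
    (hineq : ∀ t ∈ Set.Ioo (0 : ℝ) T, M ≤ f t → f' t ≤ K * f t ^ 5)
    (hT : 4 * K * T * M ^ 4 < 1 / 2) :
    ∀ t ∈ Set.Icc (0 : ℝ) T,
      f t ≤ M * (1 - 4 * K * t * M ^ 4) ^ (-(1 : ℝ) / 4) := by
  intro t ht
  rcases eq_or_lt_of_le ht.1 with rfl | htpos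
  · simpa [Real.one_rpow] using h0
  -- now 0 < t ≤ T
  have htT : t ≤ T := ht.2
  have hT0 : 0 < T := lt_of_lt_of_le htpos htT
  set g : ℝ → ℝ → ℝ := fun δ s => (M + δ) * (1 - 4 * (K + δ) * s * (M + δ) ^ 4) ^ (-(1 : ℝ) / 4)
    with hg
  -- key: for all small positive δ, f t ≤ g δ t
  have key : ∀ᶠ δ in nhdsWithin (0:ℝ) (Set.Ioi 0), f t ≤ g δ t := by
    have hFc : ContinuousAt (fun δ : ℝ => 4 * (K + δ) * T * (M + δ) ^ 4) 0 := by fun_prop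
    have hF0 : (fun δ : ℝ => 4 * (K + δ) * T * (M + δ) ^ 4) 0 < 1 := by
      simpa using hT.trans (by norm_num)
    have hev : ∀ᶠ δ in nhds (0:ℝ), 4 * (K + δ) * T * (M + δ) ^ 4 < 1 :=
      hFc.eventually_lt_const hF0
    filter_upwards [nhdsWithin_le_nhds hev, self_mem_nhdsWithin] with δ hδ1 (hδ0 : 0 < δ)
    -- positivity of the base on [0, T]
    have hbase : ∀ s : ℝ, 0 ≤ s → s ≤ T → 0 < 1 - 4 * (K + δ) * s * (M + δ) ^ 4 := by
      intro s hs0 hsT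
      have : 4 * (K + δ) * s * (M + δ) ^ 4 ≤ 4 * (K + δ) * T * (M + δ) ^ 4 :=
        mul_le_mul_of_nonneg_right (mul_le_mul_of_nonneg_left hsT
          (by linarith : (0:ℝ) ≤ 4 * (K + δ))) (by positivity)
      linarith
    have hKδ : 0 < K + δ := by linarith
    have hMδ : 0 < M + δ := by linarith
    -- g δ ≥ M + δ on [0, T]
    have hgge : ∀ s : ℝ, 0 ≤ s → s ≤ T → M + δ ≤ g δ s := by
      intro s hs0 hsT
      have h1 : 1 - 4 * (K + δ) * s * (M + δ) ^ 4 ≤ 1 := by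
        have : 0 ≤ 4 * (K + δ) * s * (M + δ) ^ 4 := by positivity
        linarith
      have := Real.one_le_rpow_of_pos_of_le_one_of_nonpos (hbase s hs0 hsT) h1
        (by norm_num : -(1:ℝ)/4 ≤ 0)
      calc M + δ = (M + δ) * 1 := by ring
        _ ≤ g δ s := by
          apply mul_le_mul_of_nonneg_left this hMδ.le
    -- find a starting point a ∈ (0, t) with f a < M + δ
    have h0cont : ContinuousWithinAt f (Set.Icc 0 T) 0 :=
      hcont 0 ⟨le_refl 0, hT0.le⟩
    have hlt : ∀ᶠ s in nhdsWithin (0:ℝ) (Set.Icc 0 T), f s < M + δ :=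
      h0cont.eventually_lt_const (by linarith)
    have hIoo : Set.Ioo (0:ℝ) t ⊆ Set.Icc 0 T := fun s hs =>
      ⟨hs.1.le, hs.2.le.trans htT⟩
    have hne : (nhdsWithin (0:ℝ) (Set.Ioo 0 t)).NeBot := left_nhdsWithin_Ioo_neBot htpos
    have hlt' : ∀ᶠ s in nhdsWithin (0:ℝ) (Set.Ioo 0 t), f s < M + δ :=
      (nhdsWithin_mono 0 hIoo) hlt
    obtain ⟨a, hfa_lt, ha0, hat⟩ := (hlt'.and (eventually_mem_nhdsWithin)).exists
    -- apply the fencing theorem on [a, t]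
    have happ := image_le_of_deriv_right_lt_deriv_boundary' (f := f) (f' := f')
      (a := a) (b := t) (B := g δ) (B' := fun x => (K + δ) * g δ x ^ 5)
      (hcont.mono (fun s hs => ⟨le_trans ha0.le hs.1, hs.2.trans htT⟩))
      (fun x hx => (hderiv x ⟨lt_of_lt_of_le ha0 hx.1, lt_of_lt_of_le hx.2 htT⟩).hasDerivWithinAt)
      (le_of_lt (lt_of_lt_of_le hfa_lt (hgge a ha0.le (hat.le.trans htT))))
      (fun x hx => (aux_gderiv (M + δ) (K + δ) hMδ hKδ x
        (hbase x (le_trans ha0.le hx.1) (hx.2.trans htT))).continuousAt.continuousWithinAt)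
      (fun x hx => (aux_gderiv (M + δ) (K + δ) hMδ hKδ x
        (hbase x (le_trans ha0.le hx.1) (hx.2.le.trans htT))).hasDerivWithinAt)
      ?_ ⟨hat.le, le_refl t⟩
    · exact happ
    · intro x hx hfx
      have hx0 : 0 ≤ x := le_trans ha0.le hx.1
      have hxT : x ≤ T := hx.2.le.trans htT
      have hgx : M + δ ≤ g δ x := hgge x hx0 hxT
      have hMfx : M ≤ f x := by rw [hfx]; linarith
      have hfx' : f' x ≤ K * f x ^ 5 :=
        hineq x ⟨lt_of_lt_of_le ha0 hx.1, lt_of_lt_of_le hx.2 htT⟩ hMfx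
      have hgx5 : 0 < g δ x ^ 5 := pow_pos (lt_of_lt_of_le hMδ hgx) 5
      calc f' x ≤ K * f x ^ 5 := hfx'
        _ = K * g δ x ^ 5 := by rw [hfx]
        _ < (K + δ) * g δ x ^ 5 := by nlinarith
  -- take the limit δ → 0⁺
  have hbaset : 0 < 1 - 4 * K * t * M ^ 4 := by
    have : 4 * K * t * M ^ 4 ≤ 4 * K * T * M ^ 4 :=
      mul_le_mul_of_nonneg_right (mul_le_mul_of_nonneg_left htT
        (by linarith : (0:ℝ) ≤ 4 * K)) (by positivity)
    linarith
  have hlim : Filter.Tendsto (fun δ => g δ t) (nhdsWithin (0:ℝ) (Set.Ioi 0))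
      (nhds (M * (1 - 4 * K * t * M ^ 4) ^ (-(1 : ℝ) / 4))) := by
    have hc : ContinuousAt (fun δ => g δ t) 0 := by
      apply ContinuousAt.mul (by fun_prop)
      exact (ContinuousAt.rpow_const (by fun_prop) (Or.inl (by simpa using hbaset.ne')))
    have h0 : g 0 t = M * (1 - 4 * K * t * M ^ 4) ^ (-(1 : ℝ) / 4) := by simp [hg]
    exact h0 ▸ hc.continuousWithinAt.tendsto
  exact ge_of_tendsto hlim key
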